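/- Let Assumption 1 hold (for every i, the map ℓ_{y_i} : q ↦ ℓ(q, y_i) is differentiable on ℝ^{d_y}, convex, and nonnegative) and let λ > 0. Then at every local minimum (θ, a, b, W) ∈ ℝ^{d_θ} × ℝ^{d_y} × ℝ^{d_y} × ℝ^{d_x × d_y} of the modified objective L̃, the parameter θ is a global minimum of the original objective L, i.e., L(θ) ≤ L(θ') for all θ' ∈ ℝ^{d_θ}. -/

import Mathlib

open scoped RealInnerProductSpace

noncomputable section

/-- The added neuron: `g(x; a, b, W)ₖ = aₖ · exp(⟨wₖ, x⟩ + bₖ)`. -/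
def addedNeuron (dx dy : ℕ) (a b : EuclideanSpace ℝ (Fin dy))
    (W : Fin dy → EuclideanSpace ℝ (Fin dx)) (x : EuclideanSpace ℝ (Fin dx)) :
    EuclideanSpace ℝ (Fin dy) :=
  WithLp.toLp 2 (fun k => a k * Real.exp (⟪W k, x⟫ + b k))

/-- A vector having nonzero inner product with every member of a finite set of nonzero vectors. -/
lemma exists_sep {n : ℕ} (s : Finset (EuclideanSpace ℝ (Fin n)))
    (hs : (0 : EuclideanSpace ℝ (Fin n)) ∉ s) :
    ∃ u : EuclideanSpace ℝ (Fin n), ∀ v ∈ s, ⟪u, v⟫ ≠ 0 := by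
  classical
  induction s using Finset.induction_on with
  | empty => exact ⟨0, by simp⟩
  | @insert v s hv ih =>
    have hv0 : v ≠ 0 := fun h => hs (by simp [h])
    obtain ⟨u, hu⟩ := ih (fun h => hs (Finset.mem_insert_of_mem h))
    set B : Finset ℝ := (insert v s).image (fun w => -⟪u, w⟫ / ⟪v, w⟫) with hB
    obtain ⟨ε, hε⟩ := Infinite.exists_notMem_finset B
    refine ⟨u + ε • v, ?_⟩
    intro w hw
    by_cases hvw : ⟪v, w⟫ = 0
    · have hwv : w ≠ v := by
        intro h; subst h
        exact hv0 (inner_self_eq_zero.mp hvw)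
      have hws : w ∈ s := by
        rcases Finset.mem_insert.mp hw with h | h
        · exact absurd h hwv
        · exact h
      rw [inner_add_left, real_inner_smul_left, hvw, mul_zero, add_zero]
      exact hu w hws
    · rw [inner_add_left, real_inner_smul_left]
      intro hcon
      apply hε
      rw [hB]
      refine Finset.mem_image.mpr ⟨w, hw, ?_⟩
      rw [div_eq_iff hvw]
      linarith

/-- If a finite exponential sum vanishes on a neighbourhood of `0`, then the coefficients
grouped by equal exponents sum to zero. -/
lemma exp_sum_zero {ι : Type*} [Fintype ι] [DecidableEq ι] (d β : ι → ℝ) {ε : ℝ} (hε : 0 < ε)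
    (h : ∀ t : ℝ, |t| < ε → ∑ i, d i * Real.exp (β i * t) = 0) (i0 : ι) :
    ∑ i ∈ Finset.univ.filter (fun i => β i = β i0), d i = 0 := by
  classical
  -- all "power sums" vanish
  have key : ∀ n : ℕ, ∀ t : ℝ, |t| < ε → ∑ i, d i * β i ^ n * Real.exp (β i * t) = 0 := by
    intro n
    induction n with
    | zero => intro t ht; simpa using h t ht
    | succ n ihn =>
      intro t ht
      have hG : ∀ s : ℝ, HasDerivAt (fun r => ∑ i, d i * β i ^ n * Real.exp (β i * r))
          (∑ i, d i * β i ^ (n + 1) * Real.exp (β i * s)) s := by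
        intro s
        apply HasDerivAt.fun_sum
        intro i _
        have h1 : HasDerivAt (fun r : ℝ => β i * r) (β i) s := by
          simpa using (hasDerivAt_id s).const_mul (β i)
        have h2 := h1.exp
        have h3 := h2.const_mul (d i * β i ^ n)
        convert h3 using 1
        · rfl
        ring
      have hev : (fun r => ∑ i, d i * β i ^ n * Real.exp (β i * r)) =ᶠ[nhds t]
          (fun _ => (0:ℝ)) := by
        have hball : ∀ᶠ r in nhds t, |r| < ε := by
          have : Set.Ioo (-ε) ε ∈ nhds t := by
            apply Ioo_mem_nhds <;> cases abs_lt.mp ht <;> linarith [abs_lt.mp ht]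
          filter_upwards [this] with r hr
          exact abs_lt.mpr ⟨hr.1, hr.2⟩
        filter_upwards [hball] with r hr
        exact ihn r hr
      have hd0 : deriv (fun r => ∑ i, d i * β i ^ n * Real.exp (β i * r)) t = 0 := by
        rw [hev.deriv_eq]; simp
      rw [← (hG t).deriv]
      exact hd0
  have pow_sum : ∀ n : ℕ, ∑ i, d i * β i ^ n = 0 := by
    intro n
    have := key n 0 (by simpa using hε)
    simpa using this
  -- interpolation polynomial
  set S : Finset ℝ := (Finset.univ.image β).erase (β i0) with hS
  set p : Polynomial ℝ := ∏ r ∈ S, (Polynomial.X - Polynomial.C r) with hp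
  have hsum : ∑ i, d i * p.eval (β i) = 0 := by
    have hev : ∀ i, p.eval (β i) =
        ∑ n ∈ Finset.range (p.natDegree + 1), p.coeff n * β i ^ n := by
      intro i; exact Polynomial.eval_eq_sum_range _
    calc ∑ i, d i * p.eval (β i)
        = ∑ i, ∑ n ∈ Finset.range (p.natDegree + 1), p.coeff n * (d i * β i ^ n) := by
          refine Finset.sum_congr rfl fun i _ => ?_
          rw [hev i, Finset.mul_sum]
          exact Finset.sum_congr rfl fun n _ => by ring
      _ = ∑ n ∈ Finset.range (p.natDegree + 1), p.coeff n * ∑ i, d i * β i ^ n := by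
          rw [Finset.sum_comm]
          exact Finset.sum_congr rfl fun n _ => by rw [Finset.mul_sum]
      _ = 0 := by simp [pow_sum]
  have heval0 : ∀ i, β i ≠ β i0 → p.eval (β i) = 0 := by
    intro i hi
    rw [hp, Polynomial.eval_prod]
    apply Finset.prod_eq_zero (i := β i)
    · rw [hS]
      exact Finset.mem_erase.mpr ⟨hi, Finset.mem_image_of_mem β (Finset.mem_univ i)⟩
    · simp
  have heval1 : p.eval (β i0) ≠ 0 := by
    rw [hp, Polynomial.eval_prod]
    rw [Finset.prod_ne_zero_iff]
    intro r hr
    simp only [Polynomial.eval_sub, Polynomial.eval_X, Polynomial.eval_C]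
    have : r ≠ β i0 := (Finset.mem_erase.mp hr).1
    intro hc
    exact this (by linarith [sub_eq_zero.mp hc])
  have hsplit : ∑ i, d i * p.eval (β i)
      = (∑ i ∈ Finset.univ.filter (fun i => β i = β i0), d i) * p.eval (β i0) := by
    rw [← Finset.sum_filter_add_sum_filter_not Finset.univ (fun i => β i = β i0)]
    have h2 : ∑ i ∈ Finset.univ.filter (fun i => ¬ β i = β i0), d i * p.eval (β i) = 0 := by
      apply Finset.sum_eq_zero
      intro i hi
      rw [heval0 i (Finset.mem_filter.mp hi).2, mul_zero]
    rw [h2, add_zero, Finset.sum_mul]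
    refine Finset.sum_congr rfl fun i hi => ?_
    rw [(Finset.mem_filter.mp hi).2]
  have := hsplit ▸ hsum
  exact (mul_eq_zero.mp this).resolve_right heval1

/-- Gradient inequality for a differentiable convex function. -/
lemma convex_grad_ineq {n : ℕ} (f : EuclideanSpace ℝ (Fin n) → ℝ)
    (hd : Differentiable ℝ f) (hc : ConvexOn ℝ Set.univ f)
    (q p : EuclideanSpace ℝ (Fin n)) :
    f q + fderiv ℝ f q (p - q) ≤ f p := by
  set g : ℝ → ℝ := fun t => f (q + t • (p - q)) with hg
  have hpath : ∀ t : ℝ, HasDerivAt (fun s : ℝ => q + s • (p - q)) (p - q) t := by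
    intro t
    simpa using ((hasDerivAt_id t).smul_const (p - q)).const_add q
  have hgd : HasDerivAt g (fderiv ℝ f q (p - q)) 0 := by
    have h0 : HasFDerivAt f (fderiv ℝ f q) (q + (0:ℝ) • (p - q)) := by
      simpa using (hd q).hasFDerivAt
    exact h0.comp_hasDerivAt 0 (hpath 0)
  have hgc : ConvexOn ℝ Set.univ g := by
    have := hc.comp_affineMap (AffineMap.lineMap q p : ℝ →ᵃ[ℝ] EuclideanSpace ℝ (Fin n))
    have heq : g = f ∘ (AffineMap.lineMap q p : ℝ →ᵃ[ℝ] EuclideanSpace ℝ (Fin n)) := by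
      funext t
      simp [hg, AffineMap.lineMap_apply, vsub_eq_sub, vadd_eq_add]
      congr 1
      abel
    rw [heq]
    simpa using this
  have hslope := hgc.le_slope_of_hasDerivAt (Set.mem_univ (0:ℝ)) (Set.mem_univ (1:ℝ))
    one_pos hgd
  have hs : slope g 0 1 = g 1 - g 0 := by
    simp [slope_def_field]
  rw [hs] at hslope
  have hg0 : g 0 = f q := by simp [hg]
  have hg1 : g 1 = f p := by simp [hg]
  rw [hg0, hg1] at hslope
  linarith

/-- Derivative of a sum of losses along parametrized lines. -/
lemma hasDerivAt_sum_loss {m dy : ℕ} (y : Fin m → EuclideanSpace ℝ (Fin dy))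
    (ℓ : EuclideanSpace ℝ (Fin dy) → EuclideanSpace ℝ (Fin dy) → ℝ)
    (hdiff : ∀ i : Fin m, Differentiable ℝ (fun q => ℓ q (y i)))
    (C v : Fin m → EuclideanSpace ℝ (Fin dy)) (φ : Fin m → ℝ → ℝ) (φ' : Fin m → ℝ)
    (hφ : ∀ i, HasDerivAt (φ i) (φ' i) 0) (hφ0 : ∀ i, φ i 0 = 0) :
    HasDerivAt (fun t => ∑ i, ℓ (C i + φ i t • v i) (y i))
      (∑ i, φ' i * fderiv ℝ (fun q => ℓ q (y i)) (C i) (v i)) 0 := by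
  apply HasDerivAt.fun_sum
  intro i _
  have h1 : HasDerivAt (fun t => C i + φ i t • v i) (φ' i • v i) 0 :=
    ((hφ i).smul_const (v i)).const_add (C i)
  have hpt : C i + φ i 0 • v i = C i := by rw [hφ0 i, zero_smul, add_zero]
  have h2 : HasFDerivAt (fun q => ℓ q (y i)) (fderiv ℝ (fun q => ℓ q (y i)) (C i))
      (C i + φ i 0 • v i) := by
    rw [hpt]; exact (hdiff i (C i)).hasFDerivAt
  have h3 := h2.comp_hasDerivAt 0 h1
  convert h3 using 1
  · rfl
  rw [ContinuousLinearMap.map_smul, smul_eq_mul]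

lemma addedNeuron_zero (dx dy : ℕ) (b : EuclideanSpace ℝ (Fin dy))
    (W : Fin dy → EuclideanSpace ℝ (Fin dx)) (x : EuclideanSpace ℝ (Fin dx)) :
    addedNeuron dx dy 0 b W x = 0 := by
  ext j
  simp [addedNeuron]

lemma addedNeuron_a_line (dx dy : ℕ) (a b : EuclideanSpace ℝ (Fin dy))
    (W : Fin dy → EuclideanSpace ℝ (Fin dx)) (x : EuclideanSpace ℝ (Fin dx))
    (k : Fin dy) (t : ℝ) :
    addedNeuron dx dy (a + t • EuclideanSpace.single k (1:ℝ)) b W x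
      = addedNeuron dx dy a b W x
        + (t * Real.exp (⟪W k, x⟫ + b k)) • EuclideanSpace.single k (1:ℝ) := by
  ext j
  simp only [addedNeuron, PiLp.add_apply, PiLp.smul_apply, EuclideanSpace.single_apply,
    smul_eq_mul, PiLp.toLp_apply]
  by_cases h : j = k
  · subst h; simp; ring
  · simp [h]

lemma addedNeuron_b_line (dx dy : ℕ) (a b : EuclideanSpace ℝ (Fin dy))
    (W : Fin dy → EuclideanSpace ℝ (Fin dx)) (x : EuclideanSpace ℝ (Fin dx))
    (k : Fin dy) (t : ℝ) :
    addedNeuron dx dy a (b + t • EuclideanSpace.single k (1:ℝ)) W x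
      = addedNeuron dx dy a b W x
        + (a k * Real.exp (⟪W k, x⟫ + b k) * (Real.exp t - 1)) •
            EuclideanSpace.single k (1:ℝ) := by
  ext j
  simp only [addedNeuron, PiLp.add_apply, PiLp.smul_apply, EuclideanSpace.single_apply,
    smul_eq_mul, PiLp.toLp_apply]
  by_cases h : j = k
  · subst h; simp [Real.exp_add]; ring
  · simp [h]

/-- Under Assumption 1 (each `ℓ_{y_i}` is differentiable, convex and
nonnegative) and `λ > 0`, at every local minimum `(θ, a, b, W)` of the modified
objective `L̃`, the parameter `θ` is a global minimum of the original objective `L`. -/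
theorem elimination_global_min
    (m dx dy dθ : ℕ) (hm : 0 < m) (hdx : 0 < dx) (hdy : 0 < dy) (hdθ : 0 < dθ)
    (x : Fin m → EuclideanSpace ℝ (Fin dx))
    (y : Fin m → EuclideanSpace ℝ (Fin dy))
    (f : EuclideanSpace ℝ (Fin dx) → EuclideanSpace ℝ (Fin dθ) → EuclideanSpace ℝ (Fin dy))
    (ℓ : EuclideanSpace ℝ (Fin dy) → EuclideanSpace ℝ (Fin dy) → ℝ)
    -- Assumption 1: each ℓ_{y_i} is differentiable, convex and nonnegative
    (hdiff : ∀ i : Fin m, Differentiable ℝ (fun q => ℓ q (y i)))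
    (hconv : ∀ i : Fin m, ConvexOn ℝ Set.univ (fun q => ℓ q (y i)))
    (hnonneg : ∀ (i : Fin m) (q : EuclideanSpace ℝ (Fin dy)), 0 ≤ ℓ q (y i))
    (lam : ℝ) (hlam : 0 < lam)
    -- the original objective L
    (L : EuclideanSpace ℝ (Fin dθ) → ℝ)
    (hL : ∀ θ, L θ = (1 / (m : ℝ)) * ∑ i, ℓ (f (x i) θ) (y i))
    -- the modified objective L̃
    (Lt : EuclideanSpace ℝ (Fin dθ) → EuclideanSpace ℝ (Fin dy) → EuclideanSpace ℝ (Fin dy) →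
      (Fin dy → EuclideanSpace ℝ (Fin dx)) → ℝ)
    (hLt : ∀ θ a b W, Lt θ a b W =
      (1 / (m : ℝ)) * ∑ i, ℓ (f (x i) θ + addedNeuron dx dy a b W (x i)) (y i)
        + lam * ‖a‖ ^ 2)
    (θ : EuclideanSpace ℝ (Fin dθ)) (a b : EuclideanSpace ℝ (Fin dy))
    (W : Fin dy → EuclideanSpace ℝ (Fin dx))
    (hmin : IsLocalMin (fun p : EuclideanSpace ℝ (Fin dθ) × EuclideanSpace ℝ (Fin dy) ×
        EuclideanSpace ℝ (Fin dy) × (Fin dy → EuclideanSpace ℝ (Fin dx)) =>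
        Lt p.1 p.2.1 p.2.2.1 p.2.2.2) (θ, a, b, W)) :
    ∀ θ' : EuclideanSpace ℝ (Fin dθ), L θ ≤ L θ' := by
  classical
  have hm' : (0:ℝ) < (m:ℝ) := by exact_mod_cast hm
  have hm0 : (1 / (m:ℝ)) ≠ 0 := by positivity
  -- abbreviations for step 1
  set C : Fin m → EuclideanSpace ℝ (Fin dy) :=
    fun i => f (x i) θ + addedNeuron dx dy a b W (x i) with hC
  set E : Fin m → Fin dy → ℝ := fun i k => Real.exp (⟪W k, x i⟫ + b k) with hE
  set c1 : Fin m → Fin dy → ℝ :=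
    fun i k => fderiv ℝ (fun q => ℓ q (y i)) (C i) (EuclideanSpace.single k (1:ℝ)) with hc1
  -- Step 1a : derivative along the `a`-direction
  have eqA : ∀ k : Fin dy,
      (1/(m:ℝ)) * ∑ i, E i k * c1 i k + lam * (2 * a k) = 0 := by
    intro k
    set v : EuclideanSpace ℝ (Fin dy) := EuclideanSpace.single k (1:ℝ) with hv
    have hfun : (fun t : ℝ => Lt θ (a + t • v) b W)
        = fun t => (1/(m:ℝ)) * ∑ i, ℓ (C i + (t * E i k) • v) (y i)
            + lam * (‖a‖^2 + 2 * a k * t + t^2) := by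
      funext t
      rw [hLt]
      congr 1
      · congr 1
        refine Finset.sum_congr rfl fun i _ => ?_
        rw [hv, addedNeuron_a_line, ← add_assoc]
      · have h1 : ⟪a, t • v⟫ = t * a k := by
          rw [real_inner_smul_right]
          have h2 : ⟪a, v⟫ = a k := by
            rw [hv, EuclideanSpace.inner_single_right]; simp
          rw [h2]
        have h2 : ‖t • v‖^2 = t^2 := by
          rw [norm_smul, hv, EuclideanSpace.norm_single, norm_one, mul_one, Real.norm_eq_abs, sq_abs]
        rw [norm_add_sq_real, h1, h2]
        ring_nf
    have hderiv : HasDerivAt (fun t : ℝ => Lt θ (a + t • v) b W)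
        ((1/(m:ℝ)) * ∑ i, E i k * c1 i k + lam * (2 * a k)) 0 := by
      rw [hfun]
      apply HasDerivAt.add
      · refine HasDerivAt.const_mul _ ?_
        exact hasDerivAt_sum_loss y ℓ hdiff C (fun _ => v) (fun i t => t * E i k)
          (fun i => E i k) (fun i => by simpa using (hasDerivAt_id (0:ℝ)).mul_const (E i k))
          (fun i => by simp)
      · have hA : HasDerivAt (fun t : ℝ => 2 * a k * t) (2 * a k) 0 := by
          simpa using (hasDerivAt_id (0:ℝ)).const_mul (2 * a k)
        have hB : HasDerivAt (fun t : ℝ => t^2) 0 0 := by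
          simpa using hasDerivAt_pow 2 (0:ℝ)
        have := ((hA.const_add (‖a‖^2)).add hB).const_mul lam
        simpa using this
    have hlocmin : IsLocalMin (fun t : ℝ => Lt θ (a + t • v) b W) 0 := by
      have hc : ContinuousAt (fun t : ℝ => ((θ, a + t • v, b, W) :
          EuclideanSpace ℝ (Fin dθ) × EuclideanSpace ℝ (Fin dy) ×
          EuclideanSpace ℝ (Fin dy) × (Fin dy → EuclideanSpace ℝ (Fin dx)))) 0 := by
        fun_prop
      have hmin' : IsLocalMin (fun p : EuclideanSpace ℝ (Fin dθ) × EuclideanSpace ℝ (Fin dy) ×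
          EuclideanSpace ℝ (Fin dy) × (Fin dy → EuclideanSpace ℝ (Fin dx)) =>
          Lt p.1 p.2.1 p.2.2.1 p.2.2.2) (θ, a + (0:ℝ) • v, b, W) := by
        simpa using hmin
      exact IsLocalMin.comp_continuous (g := fun t : ℝ => (θ, a + t • v, b, W)) hmin' hc
    exact hlocmin.hasDerivAt_eq_zero hderiv
  -- Step 1b : derivative along the `b`-direction
  have eqB : ∀ k : Fin dy,
      (1/(m:ℝ)) * ∑ i, (a k * E i k) * c1 i k = 0 := by
    intro k
    set v : EuclideanSpace ℝ (Fin dy) := EuclideanSpace.single k (1:ℝ) with hv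
    have hfun : (fun t : ℝ => Lt θ a (b + t • v) W)
        = fun t => (1/(m:ℝ)) *
            ∑ i, ℓ (C i + (a k * E i k * (Real.exp t - 1)) • v) (y i)
            + lam * ‖a‖^2 := by
      funext t
      rw [hLt]
      congr 1
      congr 1
      refine Finset.sum_congr rfl fun i _ => ?_
      rw [hv, addedNeuron_b_line, ← add_assoc]
    have hderiv : HasDerivAt (fun t : ℝ => Lt θ a (b + t • v) W)
        ((1/(m:ℝ)) * ∑ i, (a k * E i k) * c1 i k) 0 := by
      rw [hfun]
      have hsum := hasDerivAt_sum_loss y ℓ hdiff C (fun _ => v)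
        (fun i t => a k * E i k * (Real.exp t - 1)) (fun i => a k * E i k)
        (fun i => by
          have := ((Real.hasDerivAt_exp 0).sub_const 1).const_mul (a k * E i k)
          simpa using this)
        (fun i => by simp)
      simpa using (hsum.const_mul (1/(m:ℝ))).add_const (lam * ‖a‖^2)
    have hlocmin : IsLocalMin (fun t : ℝ => Lt θ a (b + t • v) W) 0 := by
      have hc : ContinuousAt (fun t : ℝ => ((θ, a, b + t • v, W) :
          EuclideanSpace ℝ (Fin dθ) × EuclideanSpace ℝ (Fin dy) ×
          EuclideanSpace ℝ (Fin dy) × (Fin dy → EuclideanSpace ℝ (Fin dx)))) 0 := by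
        fun_prop
      have hmin' : IsLocalMin (fun p : EuclideanSpace ℝ (Fin dθ) × EuclideanSpace ℝ (Fin dy) ×
          EuclideanSpace ℝ (Fin dy) × (Fin dy → EuclideanSpace ℝ (Fin dx)) =>
          Lt p.1 p.2.1 p.2.2.1 p.2.2.2) (θ, a, b + (0:ℝ) • v, W) := by
        simpa using hmin
      exact IsLocalMin.comp_continuous (g := fun t : ℝ => (θ, a, b + t • v, W)) hmin' hc
    exact hlocmin.hasDerivAt_eq_zero hderiv
  -- Step 1 conclusion : `a = 0`
  have ha : a = 0 := by
    ext k
    have h1 := eqA k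
    have h2 := eqB k
    have hsum2 : ∑ i, (a k * E i k) * c1 i k = a k * ∑ i, E i k * c1 i k := by
      rw [Finset.mul_sum]
      exact Finset.sum_congr rfl fun i _ => by ring
    rw [hsum2] at h2
    have h3 : a k * ((1/(m:ℝ)) * ∑ i, E i k * c1 i k) = 0 := by
      rw [show a k * ((1/(m:ℝ)) * ∑ i, E i k * c1 i k)
        = (1/(m:ℝ)) * (a k * ∑ i, E i k * c1 i k) from by ring]
      exact h2
    have h4 : (1/(m:ℝ)) * ∑ i, E i k * c1 i k = -(lam * (2 * a k)) := by linarith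
    rw [h4] at h3
    have h5 : (a k)^2 = 0 := by nlinarith
    have := pow_eq_zero_iff (n := 2) (by norm_num) |>.mp h5
    simpa using this
  subst ha
  clear eqA eqB hc1 c1
  -- value of the modified objective at `a = 0`
  have hLt0 : ∀ W'' : Fin dy → EuclideanSpace ℝ (Fin dx), Lt θ 0 b W'' = L θ := by
    intro W''
    rw [hLt, hL]
    simp [addedNeuron_zero]
  -- extract a metric ball from the local minimum
  have hev : ∀ᶠ p in nhds ((θ, (0 : EuclideanSpace ℝ (Fin dy)), b, W) :
      EuclideanSpace ℝ (Fin dθ) × EuclideanSpace ℝ (Fin dy) ×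
      EuclideanSpace ℝ (Fin dy) × (Fin dy → EuclideanSpace ℝ (Fin dx))),
      Lt θ 0 b W ≤ Lt p.1 p.2.1 p.2.2.1 p.2.2.2 := hmin
  obtain ⟨ε, hε, hball⟩ := Metric.eventually_nhds_iff.mp hev
  -- first-order condition in `a` at nearby `W'`
  have key : ∀ (k : Fin dy) (w : EuclideanSpace ℝ (Fin dx)), dist w (W k) < ε →
      ∑ i, Real.exp (⟪w, x i⟫ + b k) *
        fderiv ℝ (fun q => ℓ q (y i)) (f (x i) θ) (EuclideanSpace.single k (1:ℝ)) = 0 := by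
    intro k w hw
    set v : EuclideanSpace ℝ (Fin dy) := EuclideanSpace.single k (1:ℝ) with hv
    set W' : Fin dy → EuclideanSpace ℝ (Fin dx) := Function.update W k w with hW'
    have hWk : W' k = w := Function.update_self k w W
    have hloc : IsLocalMin (fun t : ℝ => Lt θ (t • v) b W') 0 := by
      have h00 : Lt θ ((0:ℝ) • v) b W' = L θ := by rw [zero_smul]; exact hLt0 W'
      refine Metric.eventually_nhds_iff.mpr ⟨ε, hε, fun t ht => ?_⟩
      show Lt θ ((0:ℝ) • v) b W' ≤ Lt θ (t • v) b W'
      rw [Real.dist_eq, sub_zero] at ht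
      have hdist : dist ((θ, t • v, b, W') :
          EuclideanSpace ℝ (Fin dθ) × EuclideanSpace ℝ (Fin dy) ×
          EuclideanSpace ℝ (Fin dy) × (Fin dy → EuclideanSpace ℝ (Fin dx)))
          (θ, 0, b, W) < ε := by
        rw [Prod.dist_eq, Prod.dist_eq, Prod.dist_eq]
        simp only [dist_self]
        have h1 : dist (t • v) 0 < ε := by
          rw [dist_zero_right, norm_smul, hv, EuclideanSpace.norm_single, norm_one, mul_one,
            Real.norm_eq_abs]
          exact ht
        have h2 : dist W' W < ε := by
          rw [(dist_pi_lt_iff hε)]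
          intro j
          by_cases hj : j = k
          · subst hj; rw [hWk]; exact hw
          · rw [hW', Function.update_of_ne hj, dist_self]; exact hε
        exact max_lt hε (max_lt h1 (max_lt hε h2))
      have := hball hdist
      rw [hLt0 W] at this
      rw [h00]
      exact this
    have hfun : (fun t : ℝ => Lt θ (t • v) b W')
        = fun t => (1/(m:ℝ)) *
            ∑ i, ℓ (f (x i) θ + (t * Real.exp (⟪w, x i⟫ + b k)) • v) (y i)
            + lam * t^2 := by
      funext t
      rw [hLt]
      congr 1
      · congr 1
        refine Finset.sum_congr rfl fun i _ => ?_
        have hz : (t : ℝ) • v = (0 : EuclideanSpace ℝ (Fin dy)) + t • v := by rw [zero_add]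
        rw [hz, hv, addedNeuron_a_line, addedNeuron_zero, zero_add, hWk]
      · rw [norm_smul, hv, EuclideanSpace.norm_single, norm_one, mul_one, Real.norm_eq_abs,
          sq_abs]
    have hderiv : HasDerivAt (fun t : ℝ => Lt θ (t • v) b W')
        ((1/(m:ℝ)) * ∑ i, Real.exp (⟪w, x i⟫ + b k) *
          fderiv ℝ (fun q => ℓ q (y i)) (f (x i) θ) v) 0 := by
      rw [hfun]
      have hsum := hasDerivAt_sum_loss y ℓ hdiff (fun i => f (x i) θ) (fun _ => v)
        (fun i t => t * Real.exp (⟪w, x i⟫ + b k))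
        (fun i => Real.exp (⟪w, x i⟫ + b k))
        (fun i => by simpa using (hasDerivAt_id (0:ℝ)).mul_const (Real.exp (⟪w, x i⟫ + b k)))
        (fun i => by simp)
      have hpen : HasDerivAt (fun t : ℝ => lam * t^2) 0 0 := by
        have : HasDerivAt (fun t : ℝ => t^2) 0 0 := by simpa using hasDerivAt_pow 2 (0:ℝ)
        simpa using this.const_mul lam
      simpa using (hsum.const_mul (1/(m:ℝ))).fun_add hpen
    have h0 := hloc.hasDerivAt_eq_zero hderiv
    exact (mul_eq_zero.mp h0).resolve_left hm0
  -- eliminate the exponentials : grouped gradients vanish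
  have hgrad0 : ∀ (k : Fin dy) (i0 : Fin m),
      ∑ i ∈ Finset.univ.filter (fun i => x i = x i0),
        fderiv ℝ (fun q => ℓ q (y i)) (f (x i) θ) (EuclideanSpace.single k (1:ℝ)) = 0 := by
    obtain ⟨u, hu⟩ := exists_sep
      ((Finset.univ.image (fun pq : Fin m × Fin m => x pq.1 - x pq.2)).filter
        (fun v => v ≠ 0)) (by simp)
    have husep : ∀ i j : Fin m, x i ≠ x j → ⟪u, x i - x j⟫ ≠ 0 := by
      intro i j hij
      apply hu
      refine Finset.mem_filter.mpr ⟨Finset.mem_image.mpr ⟨(i, j), Finset.mem_univ _, rfl⟩, ?_⟩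
      exact sub_ne_zero.mpr hij
    intro k i0
    set c : Fin m → ℝ :=
      fun i => fderiv ℝ (fun q => ℓ q (y i)) (f (x i) θ) (EuclideanSpace.single k (1:ℝ))
      with hcdef
    set d : Fin m → ℝ := fun i => c i * Real.exp (⟪W k, x i⟫ + b k) with hd
    set β : Fin m → ℝ := fun i => ⟪u, x i⟫ with hβ
    have hδ : 0 < ε / (‖u‖ + 1) := by positivity
    have hsum : ∀ t : ℝ, |t| < ε / (‖u‖ + 1) → ∑ i, d i * Real.exp (β i * t) = 0 := by
      intro t ht
      have hwdist : dist (W k + t • u) (W k) < ε := by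
        rw [dist_eq_norm, add_sub_cancel_left, norm_smul, Real.norm_eq_abs]
        calc |t| * ‖u‖ ≤ |t| * (‖u‖ + 1) := by
              exact mul_le_mul_of_nonneg_left (by linarith) (abs_nonneg t)
          _ < ε := by
              rw [← lt_div_iff₀ (by positivity)]
              exact ht
      have hkey := key k (W k + t • u) hwdist
      calc ∑ i, d i * Real.exp (β i * t)
          = ∑ i, Real.exp (⟪W k + t • u, x i⟫ + b k) * c i := by
            refine Finset.sum_congr rfl fun i _ => ?_
            rw [inner_add_left, real_inner_smul_left, hd, hβ]
            simp only
            rw [show ⟪W k, x i⟫ + t * ⟪u, x i⟫ + b k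
              = (⟪W k, x i⟫ + b k) + ⟪u, x i⟫ * t by ring, Real.exp_add]
            simp [Real.exp_add]
            ring
        _ = 0 := hkey
    have h1 := exp_sum_zero d β hδ hsum i0
    have hfe : Finset.univ.filter (fun i => β i = β i0)
        = Finset.univ.filter (fun i => x i = x i0) := by
      ext i
      simp only [Finset.mem_filter, Finset.mem_univ, true_and]
      constructor
      · intro h
        by_contra hne
        apply husep i i0 hne
        rw [hβ] at h
        simp only at h
        rw [inner_sub_right, h, sub_self]
      · intro h
        rw [hβ]
        simp only
        rw [h]
    rw [hfe] at h1
    have h2 : ∑ i ∈ Finset.univ.filter (fun i => x i = x i0), d i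
        = (∑ i ∈ Finset.univ.filter (fun i => x i = x i0), c i) *
            Real.exp (⟪W k, x i0⟫ + b k) := by
      rw [Finset.sum_mul]
      refine Finset.sum_congr rfl fun i hi => ?_
      have hxi : x i = x i0 := (Finset.mem_filter.mp hi).2
      rw [hd]
      simp only
      rw [hxi]
    rw [h2] at h1
    exact (mul_eq_zero.mp h1).resolve_right (Real.exp_ne_zero _)
  -- final convexity argument
  intro θ'
  rw [hL θ, hL θ']
  have hle : ∑ i, ℓ (f (x i) θ) (y i) ≤ ∑ i, ℓ (f (x i) θ') (y i) := by
    have hconvi : ∀ i, ℓ (f (x i) θ) (y i)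
        + fderiv ℝ (fun q => ℓ q (y i)) (f (x i) θ) (f (x i) θ' - f (x i) θ)
        ≤ ℓ (f (x i) θ') (y i) :=
      fun i => convex_grad_ineq _ (hdiff i) (hconv i) _ _
    have hzero : ∑ i, fderiv ℝ (fun q => ℓ q (y i)) (f (x i) θ)
        (f (x i) θ' - f (x i) θ) = 0 := by
      have hdecomp : ∀ (i : Fin m) (vv : EuclideanSpace ℝ (Fin dy)),
          fderiv ℝ (fun q => ℓ q (y i)) (f (x i) θ) vv
          = ∑ k, vv k * fderiv ℝ (fun q => ℓ q (y i)) (f (x i) θ)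
              (EuclideanSpace.single k (1:ℝ)) := by
        intro i vv
        have hv : ∑ k, vv k • EuclideanSpace.single k (1:ℝ) = vv := by
          have := (EuclideanSpace.basisFun (Fin dy) ℝ).sum_repr vv
          simpa using this
        calc fderiv ℝ (fun q => ℓ q (y i)) (f (x i) θ) vv
            = fderiv ℝ (fun q => ℓ q (y i)) (f (x i) θ)
                (∑ k, vv k • EuclideanSpace.single k (1:ℝ)) := by rw [hv]
          _ = ∑ k, vv k * fderiv ℝ (fun q => ℓ q (y i)) (f (x i) θ)
                (EuclideanSpace.single k (1:ℝ)) := by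
              rw [map_sum]
              exact Finset.sum_congr rfl fun k _ => by
                rw [ContinuousLinearMap.map_smul, smul_eq_mul]
      calc ∑ i, fderiv ℝ (fun q => ℓ q (y i)) (f (x i) θ) (f (x i) θ' - f (x i) θ)
          = ∑ i, ∑ k, (f (x i) θ' - f (x i) θ) k *
              fderiv ℝ (fun q => ℓ q (y i)) (f (x i) θ) (EuclideanSpace.single k (1:ℝ)) :=
            Finset.sum_congr rfl fun i _ => hdecomp i _
        _ = ∑ k, ∑ i, (f (x i) θ' - f (x i) θ) k *
              fderiv ℝ (fun q => ℓ q (y i)) (f (x i) θ) (EuclideanSpace.single k (1:ℝ)) :=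
            Finset.sum_comm
        _ = 0 := by
            apply Finset.sum_eq_zero
            intro k _
            rw [← Finset.sum_fiberwise_of_maps_to
              (fun i _ => Finset.mem_image_of_mem x (Finset.mem_univ i))
              (fun i => (f (x i) θ' - f (x i) θ) k *
                fderiv ℝ (fun q => ℓ q (y i)) (f (x i) θ) (EuclideanSpace.single k (1:ℝ)))]
            apply Finset.sum_eq_zero
            intro z hz
            obtain ⟨i0, _, rfl⟩ := Finset.mem_image.mp hz
            calc ∑ i ∈ Finset.univ.filter (fun i => x i = x i0),
                  (f (x i) θ' - f (x i) θ) k *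
                  fderiv ℝ (fun q => ℓ q (y i)) (f (x i) θ) (EuclideanSpace.single k (1:ℝ))
                = ∑ i ∈ Finset.univ.filter (fun i => x i = x i0),
                  (f (x i0) θ' - f (x i0) θ) k *
                  fderiv ℝ (fun q => ℓ q (y i)) (f (x i) θ)
                    (EuclideanSpace.single k (1:ℝ)) := by
                  refine Finset.sum_congr rfl fun i hi => ?_
                  rw [(Finset.mem_filter.mp hi).2]
              _ = (f (x i0) θ' - f (x i0) θ) k *
                  ∑ i ∈ Finset.univ.filter (fun i => x i = x i0),
                    fderiv ℝ (fun q => ℓ q (y i)) (f (x i) θ)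
                      (EuclideanSpace.single k (1:ℝ)) := by rw [Finset.mul_sum]
              _ = 0 := by rw [hgrad0 k i0, mul_zero]
    calc ∑ i, ℓ (f (x i) θ) (y i)
        = ∑ i, (ℓ (f (x i) θ) (y i)
            + fderiv ℝ (fun q => ℓ q (y i)) (f (x i) θ) (f (x i) θ' - f (x i) θ)) := by
          rw [Finset.sum_add_distrib, hzero, add_zero]
      _ ≤ ∑ i, ℓ (f (x i) θ') (y i) := Finset.sum_le_sum fun i _ => hconvi i
  exact mul_le_mul_of_nonneg_left hle (by positivity)
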